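/- arXiv:1508.00505 — 5 statements merged into one kernel-verified Lean document; each statement's English description precedes it below -/
import Mathlib

section
/- Let N ≥ 1, let S₁, S₂ be symmetric real N×N matrices, let M be a symmetric positive definite real N×N matrix, let τ₁, τ₂ > 0, Δt > 0, and let F : ℝᴺ × ℝᴺ → ℝ be continuously differentiable. Suppose the vectors (u, v) and (u⁺, v⁺) in ℝᴺ × ℝᴺ satisfy the average vector field (AVF) scheme: τ₁ M (u⁺ - u) = Δt [ -S₁ (u⁺ + u)/2 + ∫₀¹ ∇_u F((1-ξ)(u,v) + ξ(u⁺,v⁺)) dξ ] and τ₂ M (v⁺ - v) = Δt [ -S₂ (v⁺ + v)/2 - ∫₀¹ ∇_v F((1-ξ)(u,v) + ξ(u⁺,v⁺)) dξ ]. Define the discrete energy E(u,v) = ½ uᵀS₁u - ½ vᵀS₂v - F(u,v). Then exactly E(u⁺, v⁺) - E(u, v) = -(τ₁/Δt) (u⁺-u)ᵀ M (u⁺-u) + (τ₂/Δt) (v⁺-v)ᵀ M (v⁺-v). -/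
open Matrix

/-- Dot product with a fixed vector on the left, as a continuous linear map. -/
noncomputable def dotLeftCLM {N : ℕ} (w : Fin N → ℝ) : (Fin N → ℝ) →L[ℝ] ℝ :=
  LinearMap.toContinuousLinearMap
    { toFun := fun x => w ⬝ᵥ x
      map_add' := fun x y => by simp [dotProduct_add]
      map_smul' := fun c x => by simp [dotProduct_smul] }

@[simp] lemma dotLeftCLM_apply {N : ℕ} (w x : Fin N → ℝ) : dotLeftCLM w x = w ⬝ᵥ x := rfl


/-- Exact discrete energy balance for the AVF scheme applied to a semi-discretized
skew-gradient system: `E(u⁺,v⁺) - E(u,v) = -(τ₁/Δt)(u⁺-u)ᵀM(u⁺-u) + (τ₂/Δt)(v⁺-v)ᵀM(v⁺-v)`,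
where `E(u,v) = ½uᵀS₁u - ½vᵀS₂v - F(u,v)`. -/
theorem avf_skew_gradient_energy_balance (N : ℕ) (hN : 1 ≤ N)
    (S₁ S₂ M : Matrix (Fin N) (Fin N) ℝ)
    (hS₁ : S₁.IsSymm) (hS₂ : S₂.IsSymm) (hMsym : M.IsSymm) (hM : M.PosDef)
    (τ₁ τ₂ Δt : ℝ) (hτ₁ : 0 < τ₁) (hτ₂ : 0 < τ₂) (hΔt : 0 < Δt)
    (F : (Fin N → ℝ) × (Fin N → ℝ) → ℝ) (hF : ContDiff ℝ 1 F)
    -- `Fu p` and `Fv p` are the partial gradients `∇_u F` and `∇_v F` at `p`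
    (Fu Fv : (Fin N → ℝ) × (Fin N → ℝ) → (Fin N → ℝ))
    (hFu : ∀ p : (Fin N → ℝ) × (Fin N → ℝ), ∀ w : Fin N → ℝ,
      fderiv ℝ F p (w, 0) = Fu p ⬝ᵥ w)
    (hFv : ∀ p : (Fin N → ℝ) × (Fin N → ℝ), ∀ w : Fin N → ℝ,
      fderiv ℝ F p (0, w) = Fv p ⬝ᵥ w)
    (u v u' v' : Fin N → ℝ)
    -- the AVF scheme for the u-equation
    (havfu : τ₁ • M.mulVec (u' - u) =
      Δt • (-((1/2 : ℝ) • S₁.mulVec (u' + u)) +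
        ∫ ξ in (0:ℝ)..1, Fu ((1 - ξ) • (u, v) + ξ • (u', v'))))
    -- the AVF scheme for the v-equation
    (havfv : τ₂ • M.mulVec (v' - v) =
      Δt • (-((1/2 : ℝ) • S₂.mulVec (v' + v)) -
        ∫ ξ in (0:ℝ)..1, Fv ((1 - ξ) • (u, v) + ξ • (u', v')))) :
    ((1/2) * (u' ⬝ᵥ S₁.mulVec u') - (1/2) * (v' ⬝ᵥ S₂.mulVec v') - F (u', v')) -
    ((1/2) * (u ⬝ᵥ S₁.mulVec u) - (1/2) * (v ⬝ᵥ S₂.mulVec v) - F (u, v)) =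
      -(τ₁ / Δt) * ((u' - u) ⬝ᵥ M.mulVec (u' - u)) +
       (τ₂ / Δt) * ((v' - v) ⬝ᵥ M.mulVec (v' - v)) := by
  have hΔ : Δt ≠ 0 := hΔt.ne'
  -- the straight-line path
  have hγc : Continuous fun ξ : ℝ =>
      (1 - ξ) • ((u, v) : (Fin N → ℝ) × (Fin N → ℝ)) + ξ • (u', v') := by
    fun_prop
  have hfdc : Continuous fun ξ : ℝ =>
      fderiv ℝ F ((1 - ξ) • ((u, v) : (Fin N → ℝ) × (Fin N → ℝ)) + ξ • (u', v')) :=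
    (hF.continuous_fderiv one_ne_zero).comp hγc
  -- componentwise formulas and continuity for Fu, Fv along the path
  have hFu' : ∀ r, Fu r = fun i => fderiv ℝ F r (Pi.single i 1, 0) := by
    intro r; funext i
    rw [hFu r (Pi.single i 1), dotProduct_single, mul_one]
  have hFv' : ∀ r, Fv r = fun i => fderiv ℝ F r (0, Pi.single i 1) := by
    intro r; funext i
    rw [hFv r (Pi.single i 1), dotProduct_single, mul_one]
  have hFuc : Continuous fun ξ : ℝ =>
      Fu ((1 - ξ) • ((u, v) : (Fin N → ℝ) × (Fin N → ℝ)) + ξ • (u', v')) := by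
    simp only [hFu']
    exact continuous_pi fun i => hfdc.clm_apply continuous_const
  have hFvc : Continuous fun ξ : ℝ =>
      Fv ((1 - ξ) • ((u, v) : (Fin N → ℝ) × (Fin N → ℝ)) + ξ • (u', v')) := by
    simp only [hFv']
    exact continuous_pi fun i => hfdc.clm_apply continuous_const
  have hFui := hFuc.intervalIntegrable (μ := MeasureTheory.volume) (0:ℝ) 1
  have hFvi := hFvc.intervalIntegrable (μ := MeasureTheory.volume) (0:ℝ) 1
  -- derivative along the path
  have hγd : ∀ ξ : ℝ, HasDerivAt
      (fun t : ℝ => (1 - t) • ((u, v) : (Fin N → ℝ) × (Fin N → ℝ)) + t • (u', v'))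
      ((u', v') - (u, v)) ξ := by
    intro ξ
    have h1 : HasDerivAt (fun t : ℝ => (1 - t) • ((u, v) : (Fin N → ℝ) × (Fin N → ℝ)))
        ((-1 : ℝ) • ((u, v) : (Fin N → ℝ) × (Fin N → ℝ))) ξ :=
      (((hasDerivAt_id ξ).const_sub 1)).smul_const _
    have h2 : HasDerivAt (fun t : ℝ => t • ((u', v') : (Fin N → ℝ) × (Fin N → ℝ)))
        ((1 : ℝ) • ((u', v') : (Fin N → ℝ) × (Fin N → ℝ))) ξ :=
      (hasDerivAt_id ξ).smul_const _
    have := h1.add h2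
    rw [neg_one_smul, one_smul, neg_add_eq_sub] at this
    exact this
  have hdF : ∀ ξ : ℝ, HasDerivAt
      (fun t : ℝ => F ((1 - t) • ((u, v) : (Fin N → ℝ) × (Fin N → ℝ)) + t • (u', v')))
      (fderiv ℝ F ((1 - ξ) • ((u, v) : (Fin N → ℝ) × (Fin N → ℝ)) + ξ • (u', v'))
        ((u', v') - (u, v))) ξ := fun ξ =>
    ((hF.differentiable one_ne_zero _).hasFDerivAt).comp_hasDerivAt ξ (hγd ξ)
  -- splitting the derivative into the two partial gradients
  have hsplit : ∀ r : (Fin N → ℝ) × (Fin N → ℝ),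
      fderiv ℝ F r (((u', v') : (Fin N → ℝ) × (Fin N → ℝ)) - (u, v))
        = Fu r ⬝ᵥ (u' - u) + Fv r ⬝ᵥ (v' - v) := by
    intro r
    have h2 : (((u', v') : (Fin N → ℝ) × (Fin N → ℝ)) - (u, v))
        = ((u' - u, 0) : (Fin N → ℝ) × (Fin N → ℝ)) + (0, v' - v) := by
      simp [Prod.ext_iff]
    rw [h2, map_add, hFu, hFv]
  -- fundamental theorem of calculus along the path
  have hFTC : (∫ ξ in (0:ℝ)..1,
        (Fu ((1 - ξ) • ((u, v) : (Fin N → ℝ) × (Fin N → ℝ)) + ξ • (u', v')) ⬝ᵥ (u' - u)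
          + Fv ((1 - ξ) • ((u, v) : (Fin N → ℝ) × (Fin N → ℝ)) + ξ • (u', v')) ⬝ᵥ (v' - v)))
      = F (u', v') - F (u, v) := by
    have hint : IntervalIntegrable
        (fun ξ : ℝ => fderiv ℝ F
          ((1 - ξ) • ((u, v) : (Fin N → ℝ) × (Fin N → ℝ)) + ξ • (u', v'))
          (((u', v') : (Fin N → ℝ) × (Fin N → ℝ)) - (u, v)))
        MeasureTheory.volume 0 1 :=
      (hfdc.clm_apply continuous_const).intervalIntegrable 0 1
    have := intervalIntegral.integral_eq_sub_of_hasDerivAt (f' := fun ξ : ℝ => fderiv ℝ F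
          ((1 - ξ) • ((u, v) : (Fin N → ℝ) × (Fin N → ℝ)) + ξ • (u', v'))
          (((u', v') : (Fin N → ℝ) × (Fin N → ℝ)) - (u, v)))
      (fun ξ _ => hdF ξ) hint
    simp only [sub_self, zero_smul, one_smul, zero_add, sub_zero, add_zero] at this
    rw [← this]
    exact intervalIntegral.integral_congr fun ξ _ => (hsplit _).symm
  -- pull the dot products out of the integrals
  have hIu : (∫ ξ in (0:ℝ)..1,
        Fu ((1 - ξ) • ((u, v) : (Fin N → ℝ) × (Fin N → ℝ)) + ξ • (u', v')) ⬝ᵥ (u' - u))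
      = (u' - u) ⬝ᵥ (∫ ξ in (0:ℝ)..1,
        Fu ((1 - ξ) • ((u, v) : (Fin N → ℝ) × (Fin N → ℝ)) + ξ • (u', v'))) := by
    have := (dotLeftCLM (N := N) (u' - u)).intervalIntegral_comp_comm hFui
    simpa [dotProduct_comm] using this
  have hIv : (∫ ξ in (0:ℝ)..1,
        Fv ((1 - ξ) • ((u, v) : (Fin N → ℝ) × (Fin N → ℝ)) + ξ • (u', v')) ⬝ᵥ (v' - v))
      = (v' - v) ⬝ᵥ (∫ ξ in (0:ℝ)..1,
        Fv ((1 - ξ) • ((u, v) : (Fin N → ℝ) × (Fin N → ℝ)) + ξ • (u', v'))) := by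
    have := (dotLeftCLM (N := N) (v' - v)).intervalIntegral_comp_comm hFvi
    simpa [dotProduct_comm] using this
  have hintu : IntervalIntegrable
      (fun ξ : ℝ => Fu ((1 - ξ) • ((u, v) : (Fin N → ℝ) × (Fin N → ℝ)) + ξ • (u', v')) ⬝ᵥ (u' - u))
      MeasureTheory.volume 0 1 :=
    (((dotLeftCLM (N := N) (u' - u)).continuous.comp hFuc).congr
      (fun ξ => by simp [dotProduct_comm])).intervalIntegrable 0 1
  have hintv : IntervalIntegrable
      (fun ξ : ℝ => Fv ((1 - ξ) • ((u, v) : (Fin N → ℝ) × (Fin N → ℝ)) + ξ • (u', v')) ⬝ᵥ (v' - v))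
      MeasureTheory.volume 0 1 :=
    (((dotLeftCLM (N := N) (v' - v)).continuous.comp hFvc).congr
      (fun ξ => by simp [dotProduct_comm])).intervalIntegrable 0 1
  -- energy difference of F
  have hE : F (u', v') - F (u, v)
      = (u' - u) ⬝ᵥ (∫ ξ in (0:ℝ)..1,
          Fu ((1 - ξ) • ((u, v) : (Fin N → ℝ) × (Fin N → ℝ)) + ξ • (u', v')))
        + (v' - v) ⬝ᵥ (∫ ξ in (0:ℝ)..1,
          Fv ((1 - ξ) • ((u, v) : (Fin N → ℝ) × (Fin N → ℝ)) + ξ • (u', v'))) := by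
    rw [← hFTC, intervalIntegral.integral_add hintu hintv, hIu, hIv]
  -- symmetry cross terms
  have hcross : ∀ (S : Matrix (Fin N) (Fin N) ℝ), S.IsSymm → ∀ a b : Fin N → ℝ,
      a ⬝ᵥ S.mulVec b = b ⬝ᵥ S.mulVec a := by
    intro S hS a b
    rw [Matrix.dotProduct_mulVec, ← Matrix.mulVec_transpose, hS.eq, dotProduct_comm]
  -- dot the two AVF equations
  have e1 := congrArg (fun y => (u' - u) ⬝ᵥ y) havfu
  have e2 := congrArg (fun y => (v' - v) ⬝ᵥ y) havfv
  simp only [dotProduct_smul, dotProduct_add, dotProduct_sub,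
    dotProduct_neg, smul_eq_mul] at e1 e2
  have hexp1 : (u' - u) ⬝ᵥ S₁.mulVec (u' + u) = u' ⬝ᵥ S₁.mulVec u' - u ⬝ᵥ S₁.mulVec u := by
    have h := hcross S₁ hS₁ u u'
    simp only [sub_dotProduct, Matrix.mulVec_add, dotProduct_add] at *
    linarith
  have hexp2 : (v' - v) ⬝ᵥ S₂.mulVec (v' + v) = v' ⬝ᵥ S₂.mulVec v' - v ⬝ᵥ S₂.mulVec v := by
    have h := hcross S₂ hS₂ v v'
    simp only [sub_dotProduct, Matrix.mulVec_add, dotProduct_add] at *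
    linarith
  rw [hexp1] at e1
  rw [hexp2] at e2
  have E1 : τ₁ / Δt * ((u' - u) ⬝ᵥ M.mulVec (u' - u))
      = -(1/2 * (u' ⬝ᵥ S₁.mulVec u' - u ⬝ᵥ S₁.mulVec u))
        + (u' - u) ⬝ᵥ (∫ ξ in (0:ℝ)..1,
          Fu ((1 - ξ) • ((u, v) : (Fin N → ℝ) × (Fin N → ℝ)) + ξ • (u', v'))) := by
    rw [div_mul_eq_mul_div, div_eq_iff hΔ]
    linear_combination e1
  have E2 : τ₂ / Δt * ((v' - v) ⬝ᵥ M.mulVec (v' - v))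
      = -(1/2 * (v' ⬝ᵥ S₂.mulVec v' - v ⬝ᵥ S₂.mulVec v))
        - (v' - v) ⬝ᵥ (∫ ξ in (0:ℝ)..1,
          Fv ((1 - ξ) • ((u, v) : (Fin N → ℝ) × (Fin N → ℝ)) + ξ • (u', v'))) := by
    rw [div_mul_eq_mul_div, div_eq_iff hΔ]
    linear_combination e2
  linear_combination E1 - E2 - hE
end

section
/- Let N ≥ 1, let S₁, S₂ be symmetric real N×N matrices, let M be a symmetric positive definite real N×N matrix, let τ₁ > 0, Δt > 0, F : ℝᴺ × ℝᴺ → ℝ continuously differentiable, and fix η ∈ ℝᴺ. Suppose u, u⁺ ∈ ℝᴺ satisfy the AVF step for the u-equation with v frozen at η: τ₁ M (u⁺ - u) = Δt [ -S₁ (u⁺ + u)/2 + ∫₀¹ ∇_u F((1-ξ)u + ξ u⁺, η) dξ ]. Then, with E(u,v) = ½ uᵀS₁u - ½ vᵀS₂v - F(u,v), one has E(u⁺, η) - E(u, η) = -(τ₁/Δt)(u⁺-u)ᵀM(u⁺-u) ≤ 0; in particular E(u⁺, η) ≤ E(u, η). -/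
open Matrix

private theorem avf_aux (N : ℕ)
    (S₁ M : Matrix (Fin N) (Fin N) ℝ)
    (hS₁ : S₁.IsSymm)
    (τ₁ Δt : ℝ) (hΔt : 0 < Δt)
    (F : (Fin N → ℝ) × (Fin N → ℝ) → ℝ) (hF : ContDiff ℝ 1 F)
    (Fu : (Fin N → ℝ) × (Fin N → ℝ) → (Fin N → ℝ))
    (hFu : ∀ p : (Fin N → ℝ) × (Fin N → ℝ), ∀ w : Fin N → ℝ,
      fderiv ℝ F p (w, 0) = Fu p ⬝ᵥ w)
    (η u u' : Fin N → ℝ)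
    (havfu : τ₁ • M.mulVec (u' - u) =
      Δt • (-((1/2 : ℝ) • S₁.mulVec (u' + u)) +
        ∫ ξ in (0:ℝ)..1, Fu ((1 - ξ) • u + ξ • u', η))) :
    (1/2) * (u' ⬝ᵥ S₁.mulVec u') - F (u', η) -
      ((1/2) * (u ⬝ᵥ S₁.mulVec u) - F (u, η)) =
      -(τ₁ / Δt) * ((u' - u) ⬝ᵥ M.mulVec (u' - u)) := by
  set w := u' - u with hw
  set γ : ℝ → (Fin N → ℝ) × (Fin N → ℝ) := fun ξ => ((1 - ξ) • u + ξ • u', η) with hγ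
  have hγderiv : ∀ ξ : ℝ, HasDerivAt γ ((w, 0)) ξ := by
    intro ξ
    have h1 : HasDerivAt (fun t : ℝ => (1 - t) • u + t • u') w ξ := by
      have ha : HasDerivAt (fun t : ℝ => (1 - t) • u) (-u) ξ := by
        have : HasDerivAt (fun t : ℝ => 1 - t) (-1) ξ := by
          simpa using (hasDerivAt_id ξ).const_sub 1
        simpa using this.smul_const u
      have hb : HasDerivAt (fun t : ℝ => t • u') u' ξ := by
        simpa using (hasDerivAt_id ξ).smul_const u'
      simpa [hw, neg_add_eq_sub] using ha.fun_add hb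
    exact h1.prodMk (hasDerivAt_const ξ η)
  have hγcont : Continuous γ := by fun_prop
  have hder : ∀ ξ : ℝ, HasDerivAt (fun t => F (γ t)) (Fu (γ ξ) ⬝ᵥ w) ξ := by
    intro ξ
    have hFd : HasFDerivAt F (fderiv ℝ F (γ ξ)) (γ ξ) :=
      (hF.differentiable one_ne_zero (γ ξ)).hasFDerivAt
    have := hFd.comp_hasDerivAt ξ (hγderiv ξ)
    simpa [Function.comp_def, hFu (γ ξ) w] using this
  have hcontd : Continuous fun ξ => Fu (γ ξ) ⬝ᵥ w := by
    have : (fun ξ => Fu (γ ξ) ⬝ᵥ w) = fun ξ => fderiv ℝ F (γ ξ) (w, 0) := by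
      funext ξ; rw [hFu]
    rw [this]
    exact ((hF.continuous_fderiv one_ne_zero).comp hγcont).clm_apply continuous_const
  have hFTC : ∫ ξ in (0:ℝ)..1, Fu (γ ξ) ⬝ᵥ w = F (u', η) - F (u, η) := by
    have := intervalIntegral.integral_eq_sub_of_hasDerivAt
      (f := fun t => F (γ t)) (f' := fun ξ => Fu (γ ξ) ⬝ᵥ w)
      (fun ξ _ => hder ξ) (hcontd.intervalIntegrable 0 1)
    simpa [hγ] using this
  have hcontFu : Continuous fun ξ => Fu (γ ξ) := by
    rw [continuous_pi_iff]
    intro i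
    have : (fun ξ => Fu (γ ξ) i) = fun ξ => fderiv ℝ F (γ ξ) (Pi.single i 1, 0) := by
      funext ξ; rw [hFu]; simp [dotProduct_single]
    rw [this]
    exact ((hF.continuous_fderiv one_ne_zero).comp hγcont).clm_apply continuous_const
  have hint : IntervalIntegrable (fun ξ => Fu (γ ξ)) MeasureTheory.volume 0 1 :=
    hcontFu.intervalIntegrable 0 1
  have hswap : w ⬝ᵥ (∫ ξ in (0:ℝ)..1, Fu (γ ξ)) = ∫ ξ in (0:ℝ)..1, w ⬝ᵥ Fu (γ ξ) := by
    let L : (Fin N → ℝ) →L[ℝ] ℝ := LinearMap.toContinuousLinearMap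
      { toFun := fun x => w ⬝ᵥ x, map_add' := fun x y => dotProduct_add _ _ _,
        map_smul' := fun c x => by simp [dotProduct_smul] }
    exact (L.intervalIntegral_comp_comm hint).symm
  have key := congrArg (fun x => w ⬝ᵥ x) havfu
  simp only [dotProduct_smul, dotProduct_add, dotProduct_neg] at key
  rw [hswap] at key
  simp only [dotProduct_comm w] at key
  rw [hFTC] at key
  have hsym : w ⬝ᵥ S₁.mulVec (u' + u) = u' ⬝ᵥ S₁.mulVec u' - u ⬝ᵥ S₁.mulVec u := by
    have hcross : u ⬝ᵥ S₁.mulVec u' = u' ⬝ᵥ S₁.mulVec u := by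
      rw [dotProduct_mulVec, ← mulVec_transpose, hS₁.eq, dotProduct_comm]
    simp only [hw, sub_dotProduct, dotProduct_add, mulVec_add]
    linear_combination -hcross
  rw [dotProduct_comm (M *ᵥ w) w, dotProduct_comm (S₁ *ᵥ (u' + u)) w, hsym,
    smul_eq_mul, smul_eq_mul, smul_eq_mul] at key
  have hΔt' : Δt ≠ 0 := ne_of_gt hΔt
  field_simp
  linear_combination (2 : ℝ) * key

/-- With the second component frozen at `η`, one AVF step for the `u`-equation of a
semi-discretized skew-gradient system dissipates the energy
`E(u,v) = ½uᵀS₁u - ½vᵀS₂v - F(u,v)`: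
`E(u⁺,η) - E(u,η) = -(τ₁/Δt)(u⁺-u)ᵀM(u⁺-u) ≤ 0`. -/
theorem avf_frozen_v_energy_decrease (N : ℕ) (hN : 1 ≤ N)
    (S₁ S₂ M : Matrix (Fin N) (Fin N) ℝ)
    (hS₁ : S₁.IsSymm) (hS₂ : S₂.IsSymm) (hMsym : M.IsSymm) (hM : M.PosDef)
    (τ₁ Δt : ℝ) (hτ₁ : 0 < τ₁) (hΔt : 0 < Δt)
    (F : (Fin N → ℝ) × (Fin N → ℝ) → ℝ) (hF : ContDiff ℝ 1 F)
    -- `Fu p` is the partial gradient `∇_u F` at `p`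
    (Fu : (Fin N → ℝ) × (Fin N → ℝ) → (Fin N → ℝ))
    (hFu : ∀ p : (Fin N → ℝ) × (Fin N → ℝ), ∀ w : Fin N → ℝ,
      fderiv ℝ F p (w, 0) = Fu p ⬝ᵥ w)
    (η u u' : Fin N → ℝ)
    -- the AVF step for the u-equation with v frozen at η
    (havfu : τ₁ • M.mulVec (u' - u) =
      Δt • (-((1/2 : ℝ) • S₁.mulVec (u' + u)) +
        ∫ ξ in (0:ℝ)..1, Fu ((1 - ξ) • u + ξ • u', η))) :
    ((1/2) * (u' ⬝ᵥ S₁.mulVec u') - (1/2) * (η ⬝ᵥ S₂.mulVec η) - F (u', η)) -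
    ((1/2) * (u ⬝ᵥ S₁.mulVec u) - (1/2) * (η ⬝ᵥ S₂.mulVec η) - F (u, η)) =
      -(τ₁ / Δt) * ((u' - u) ⬝ᵥ M.mulVec (u' - u)) ∧
    -(τ₁ / Δt) * ((u' - u) ⬝ᵥ M.mulVec (u' - u)) ≤ 0 ∧
    (1/2) * (u' ⬝ᵥ S₁.mulVec u') - (1/2) * (η ⬝ᵥ S₂.mulVec η) - F (u', η) ≤
      (1/2) * (u ⬝ᵥ S₁.mulVec u) - (1/2) * (η ⬝ᵥ S₂.mulVec η) - F (u, η) := by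
  have hE := avf_aux N S₁ M hS₁ τ₁ Δt hΔt F hF Fu hFu η u u' havfu
  have hq : 0 ≤ (u' - u) ⬝ᵥ M.mulVec (u' - u) := by
    have := hM.posSemidef.re_dotProduct_nonneg (u' - u)
    simpa [star_trivial] using this
  have hcoef : 0 ≤ τ₁ / Δt := le_of_lt (div_pos hτ₁ hΔt)
  have hle : -(τ₁ / Δt) * ((u' - u) ⬝ᵥ M.mulVec (u' - u)) ≤ 0 := by
    have := mul_nonneg hcoef hq
    nlinarith
  refine ⟨by linarith [hE], hle, by linarith [hE]⟩
end

section
/- Let N ≥ 1, let S₁, S₂ be symmetric real N×N matrices, let M be a symmetric positive definite real N×N matrix, let τ₂ > 0, Δt > 0, F : ℝᴺ × ℝᴺ → ℝ continuously differentiable, and fix ζ ∈ ℝᴺ. Suppose v, v⁺ ∈ ℝᴺ satisfy the AVF step for the v-equation with u frozen at ζ: τ₂ M (v⁺ - v) = Δt [ -S₂ (v⁺ + v)/2 - ∫₀¹ ∇_v F(ζ, (1-ξ)v + ξ v⁺) dξ ]. Then, with E(u,v) = ½ uᵀS₁u - ½ vᵀS₂v - F(u,v), one has E(ζ, v⁺)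 - E(ζ, v) = (τ₂/Δt)(v⁺-v)ᵀM(v⁺-v) ≥ 0; in particular E(ζ, v⁺) ≥ E(ζ, v). -/
open Matrix

/-- With the first component frozen at `ζ`, one AVF step for the `v`-equation of a
semi-discretized skew-gradient system increases the energy
`E(u,v) = ½uᵀS₁u - ½vᵀS₂v - F(u,v)`:
`E(ζ,v⁺) - E(ζ,v) = (τ₂/Δt)(v⁺-v)ᵀM(v⁺-v) ≥ 0`. -/
theorem avf_frozen_u_energy_increase (N : ℕ) (hN : 1 ≤ N)
    (S₁ S₂ M : Matrix (Fin N) (Fin N) ℝ)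
    (hS₁ : S₁.IsSymm) (hS₂ : S₂.IsSymm) (hMsym : M.IsSymm) (hM : M.PosDef)
    (τ₂ Δt : ℝ) (hτ₂ : 0 < τ₂) (hΔt : 0 < Δt)
    (F : (Fin N → ℝ) × (Fin N → ℝ) → ℝ) (hF : ContDiff ℝ 1 F)
    -- `Fv p` is the partial gradient `∇_v F` at `p`
    (Fv : (Fin N → ℝ) × (Fin N → ℝ) → (Fin N → ℝ))
    (hFv : ∀ p : (Fin N → ℝ) × (Fin N → ℝ), ∀ w : Fin N → ℝ,
      fderiv ℝ F p (0, w) = Fv p ⬝ᵥ w)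
    (ζ v v' : Fin N → ℝ)
    -- the AVF step for the v-equation with u frozen at ζ
    (havfv : τ₂ • M.mulVec (v' - v) =
      Δt • (-((1/2 : ℝ) • S₂.mulVec (v' + v)) -
        ∫ ξ in (0:ℝ)..1, Fv (ζ, (1 - ξ) • v + ξ • v'))) :
    ((1/2) * (ζ ⬝ᵥ S₁.mulVec ζ) - (1/2) * (v' ⬝ᵥ S₂.mulVec v') - F (ζ, v')) -
    ((1/2) * (ζ ⬝ᵥ S₁.mulVec ζ) - (1/2) * (v ⬝ᵥ S₂.mulVec v) - F (ζ, v)) =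
      (τ₂ / Δt) * ((v' - v) ⬝ᵥ M.mulVec (v' - v)) ∧
    0 ≤ (τ₂ / Δt) * ((v' - v) ⬝ᵥ M.mulVec (v' - v)) ∧
    (1/2) * (ζ ⬝ᵥ S₁.mulVec ζ) - (1/2) * (v ⬝ᵥ S₂.mulVec v) - F (ζ, v) ≤
      (1/2) * (ζ ⬝ᵥ S₁.mulVec ζ) - (1/2) * (v' ⬝ᵥ S₂.mulVec v') - F (ζ, v') := by
  set w : Fin N → ℝ := v' - v with hw
  set p : ℝ → (Fin N → ℝ) × (Fin N → ℝ) := fun ξ => (ζ, (1 - ξ) • v + ξ • v') with hp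
  have hdiffF : Differentiable ℝ F := hF.differentiable one_ne_zero
  have hpcont : Continuous p := by
    apply Continuous.prodMk continuous_const
    exact ((continuous_const.sub continuous_id).smul continuous_const).add
      (continuous_id.smul continuous_const)
  -- continuity of Fv along p
  have hFvc : Continuous fun q => Fv q := by
    have h := hF.continuous_fderiv one_ne_zero
    refine continuous_pi fun i => ?_
    have : (fun q => Fv q i) = fun q => fderiv ℝ F q (0, Pi.single i 1) := by
      funext q
      have := hFv q (Pi.single i 1)
      simp [dotProduct_single] at this
      simpa using this.symm
    rw [this]
    exact h.clm_apply continuous_const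
  have hFvpc : Continuous fun ξ => Fv (p ξ) := hFvc.comp hpcont
  have hFvint : IntervalIntegrable (fun ξ => Fv (p ξ)) MeasureTheory.volume 0 1 :=
    hFvpc.intervalIntegrable 0 1
  -- path derivative
  have hpath : ∀ ξ : ℝ, HasDerivAt p ((0 : Fin N → ℝ), w) ξ := by
    intro ξ
    refine (hasDerivAt_const ξ ζ).prodMk ?_
    have h1 : HasDerivAt (fun ξ : ℝ => (1 - ξ) • v) ((-1 : ℝ) • v) ξ :=
      (((hasDerivAt_id ξ).const_sub 1)).smul_const v
    have h2 : HasDerivAt (fun ξ : ℝ => ξ • v') ((1 : ℝ) • v') ξ :=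
      (hasDerivAt_id ξ).smul_const v'
    have := h1.add h2
    convert this using 1
    funext i
    simp [hw]
    ring
    rw [hw, neg_one_smul, one_smul, neg_add_eq_sub]
  -- FTC
  have hderiv : ∀ ξ : ℝ, HasDerivAt (fun ξ => F (p ξ)) (Fv (p ξ) ⬝ᵥ w) ξ := by
    intro ξ
    have h := (hdiffF (p ξ)).hasFDerivAt.comp_hasDerivAt ξ (hpath ξ)
    rw [hFv (p ξ) w] at h
    exact h
  have hcont : Continuous fun ξ => Fv (p ξ) ⬝ᵥ w := by
    unfold dotProduct
    exact continuous_finset_sum _ fun i _ => (((continuous_apply i).comp hFvpc).mul continuous_const)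
  have hFTC : F (p 1) - F (p 0) = ∫ ξ in (0:ℝ)..1, Fv (p ξ) ⬝ᵥ w := by
    rw [intervalIntegral.integral_eq_sub_of_hasDerivAt (fun ξ _ => hderiv ξ)
      (hcont.intervalIntegrable 0 1)]
  have hp0 : p 0 = (ζ, v) := by simp [hp]
  have hp1 : p 1 = (ζ, v') := by simp [hp]
  -- swap dot product and integral
  have hswap : (∫ ξ in (0:ℝ)..1, Fv (p ξ)) ⬝ᵥ w = ∫ ξ in (0:ℝ)..1, Fv (p ξ) ⬝ᵥ w := by
    let L : (Fin N → ℝ) →L[ℝ] ℝ := ∑ i, w i • (ContinuousLinearMap.proj i)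
    have hL : ∀ x : Fin N → ℝ, L x = x ⬝ᵥ w := by
      intro x
      simp [L, dotProduct, ContinuousLinearMap.sum_apply, mul_comm]
    rw [← hL, ← ContinuousLinearMap.intervalIntegral_comp_comm L hFvint]
    exact intervalIntegral.integral_congr fun ξ _ => hL _
  -- dot havfv with w
  have key := congrArg (fun x => w ⬝ᵥ x) havfv
  simp only [dotProduct_smul, smul_eq_mul, dotProduct_sub,
    dotProduct_neg] at key
  -- symmetry fact
  have hsym : w ⬝ᵥ S₂.mulVec (v' + v) = v' ⬝ᵥ S₂.mulVec v' - v ⬝ᵥ S₂.mulVec v := by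
    have hcross : v ⬝ᵥ S₂.mulVec v' = v' ⬝ᵥ S₂.mulVec v := by
      rw [Matrix.dotProduct_mulVec, ← Matrix.mulVec_transpose, hS₂.eq, dotProduct_comm]
    simp [hw, sub_dotProduct, Matrix.mulVec_add, dotProduct_add]
    linarith
  have hFdiff : F (ζ, v') - F (ζ, v) = w ⬝ᵥ ∫ ξ in (0:ℝ)..1, Fv (p ξ) := by
    rw [dotProduct_comm, hswap, ← hFTC, hp0, hp1]
  have hQ : (0:ℝ) ≤ w ⬝ᵥ M.mulVec w := by
    have := hM.posSemidef.dotProduct_mulVec_nonneg w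
    simpa using this
  have hΔt' : Δt ≠ 0 := ne_of_gt hΔt
  have hkey2 : τ₂ * (w ⬝ᵥ M.mulVec w) =
      Δt * (-((1/2) * (w ⬝ᵥ S₂.mulVec (v' + v))) - w ⬝ᵥ ∫ ξ in (0:ℝ)..1, Fv (p ξ)) := by
    simpa [mul_sub, mul_neg] using key
  have heq : ((1/2) * (ζ ⬝ᵥ S₁.mulVec ζ) - (1/2) * (v' ⬝ᵥ S₂.mulVec v') - F (ζ, v')) -
    ((1/2) * (ζ ⬝ᵥ S₁.mulVec ζ) - (1/2) * (v ⬝ᵥ S₂.mulVec v) - F (ζ, v)) =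
      (τ₂ / Δt) * (w ⬝ᵥ M.mulVec w) := by
    have h1 : F (ζ, v') - F (ζ, v) = w ⬝ᵥ ∫ ξ in (0:ℝ)..1, Fv (p ξ) := hFdiff
    field_simp
    nlinarith [hkey2, hsym, h1]
  have hnn : 0 ≤ (τ₂ / Δt) * (w ⬝ᵥ M.mulVec w) :=
    mul_nonneg (div_nonneg hτ₂.le hΔt.le) hQ
  exact ⟨heq, hnn, by linarith⟩
end

section
/- Let H : ℝᴺ → ℝ be continuously differentiable, let J be a real skew-symmetric N×N matrix (Jᵀ = -J), let Δt > 0, and suppose y, y⁺ ∈ ℝᴺ satisfy the AVF scheme y⁺ = y + Δt · J ∫₀¹ ∇H((1-ξ) y + ξ y⁺) dξ. Then H(y⁺) = H(y), i.e. the average vector field method exactly preserves the energy of Hamiltonian systems ẏ = J ∇H(y). -/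
open Matrix

/-- The AVF method exactly preserves the energy of Hamiltonian systems `ẏ = J∇H(y)`
with `J` skew-symmetric: if `y⁺ = y + Δt·J ∫₀¹ ∇H((1-ξ)y + ξy⁺) dξ` then `H(y⁺) = H(y)`. -/
theorem avf_hamiltonian_energy_preservation (N : ℕ) (hN : 1 ≤ N)
    (H : (Fin N → ℝ) → ℝ) (hH : ContDiff ℝ 1 H)
    -- `gH y` is the gradient `∇H(y)`
    (gH : (Fin N → ℝ) → (Fin N → ℝ))
    (hgH : ∀ y w : Fin N → ℝ, fderiv ℝ H y w = gH y ⬝ᵥ w)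
    (J : Matrix (Fin N) (Fin N) ℝ) (hJ : Jᵀ = -J)
    (Δt : ℝ) (hΔt : 0 < Δt)
    (y y' : Fin N → ℝ)
    (havf : y' = y + Δt • J.mulVec (∫ ξ in (0:ℝ)..1, gH ((1 - ξ) • y + ξ • y'))) :
    H y' = H y := by
  -- gH in terms of fderiv, hence continuous
  have hgH' : ∀ x : Fin N → ℝ, gH x = fun i => fderiv ℝ H x (Pi.single i 1) := by
    intro x
    funext i
    rw [hgH, dotProduct_single, mul_one]
  have hfc : Continuous fun x : Fin N → ℝ => fderiv ℝ H x :=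
    hH.continuous_fderiv one_ne_zero
  have hgc : Continuous gH := by
    have : Continuous fun x : Fin N → ℝ => fun i => fderiv ℝ H x (Pi.single i 1) := by
      apply continuous_pi
      intro i
      exact hfc.clm_apply continuous_const
    simpa [funext hgH'] using this
  -- the path γ
  set γ : ℝ → (Fin N → ℝ) := fun ξ => (1 - ξ) • y + ξ • y' with hγ
  have hγc : Continuous γ := by fun_prop
  have hγd : ∀ ξ : ℝ, HasDerivAt γ (y' - y) ξ := by
    intro ξ
    have h1 : HasDerivAt (fun ξ : ℝ => (1 - ξ) • y) ((-1 : ℝ) • y) ξ := by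
      have := ((hasDerivAt_const ξ (1:ℝ)).sub (hasDerivAt_id ξ)).smul_const y
      simpa using this
    have h2 : HasDerivAt (fun ξ : ℝ => ξ • y') ((1 : ℝ) • y') ξ :=
      (hasDerivAt_id ξ).smul_const y'
    have h := h1.add h2
    rw [hγ]
    have e : y' - y = (-1 : ℝ) • y + (1 : ℝ) • y' := by rw [neg_one_smul, one_smul]; abel
    rw [e]; exact h
  set v := y' - y with hv
  set g : Fin N → ℝ := ∫ ξ in (0:ℝ)..1, gH (γ ξ) with hg
  -- FTC
  have hcomp : ∀ ξ : ℝ, HasDerivAt (H ∘ γ) (gH (γ ξ) ⬝ᵥ v) ξ := by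
    intro ξ
    have hd := (hH.differentiable one_ne_zero (γ ξ)).hasFDerivAt
    have := hd.comp_hasDerivAt ξ (hγd ξ)
    simpa [hgH] using this
  have hintlhs : Continuous fun ξ => gH (γ ξ) ⬝ᵥ v := by
    have : Continuous fun ξ => gH (γ ξ) := hgc.comp hγc
    unfold dotProduct
    exact continuous_finset_sum _ fun i _ => ((continuous_apply i).comp this).mul continuous_const
  have hFTC : (∫ ξ in (0:ℝ)..1, gH (γ ξ) ⬝ᵥ v) = H (γ 1) - H (γ 0) := by
    exact intervalIntegral.integral_eq_sub_of_hasDerivAt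
      (fun ξ _ => hcomp ξ) (hintlhs.intervalIntegrable 0 1)
  -- pull dot product out of the integral
  have hint : IntervalIntegrable (fun ξ => gH (γ ξ)) MeasureTheory.volume 0 1 :=
    (hgc.comp hγc).intervalIntegrable 0 1
  have hpull : (∫ ξ in (0:ℝ)..1, gH (γ ξ) ⬝ᵥ v) = g ⬝ᵥ v := by
    let L : (Fin N → ℝ) →L[ℝ] ℝ :=
      LinearMap.toContinuousLinearMap
        { toFun := fun w => w ⬝ᵥ v
          map_add' := fun a b => add_dotProduct a b v
          map_smul' := fun c a => smul_dotProduct c a v }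
    have h := L.intervalIntegral_comp_comm hint (a := 0) (b := 1)
    rw [hg]
    simpa [L, LinearMap.coe_toContinuousLinearMap'] using h
  -- skew symmetry kills the quadratic form
  have hvJ : v = Δt • J.mulVec g := by
    rw [hv, havf]; abel
  have hzero : g ⬝ᵥ v = 0 := by
    rw [hvJ, dotProduct_smul, smul_eq_mul]
    have h1 : g ⬝ᵥ J.mulVec g = Jᵀ.mulVec g ⬝ᵥ g := by
      rw [Matrix.dotProduct_mulVec, Matrix.mulVec_transpose]
    have h2 : g ⬝ᵥ J.mulVec g = -(g ⬝ᵥ J.mulVec g) := by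
      calc g ⬝ᵥ J.mulVec g = Jᵀ.mulVec g ⬝ᵥ g := h1
        _ = (-J).mulVec g ⬝ᵥ g := by rw [hJ]
        _ = -(J.mulVec g ⬝ᵥ g) := by rw [Matrix.neg_mulVec, neg_dotProduct]
        _ = -(g ⬝ᵥ J.mulVec g) := by rw [dotProduct_comm]
    have : g ⬝ᵥ J.mulVec g = 0 := by linarith
    rw [this, mul_zero]
  have hγ0 : γ 0 = y := by simp [hγ]
  have hγ1 : γ 1 = y' := by simp [hγ]
  have := hFTC
  rw [hpull, hzero, hγ0, hγ1] at this
  linarith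
end

section
/- Let V : ℝᴺ → ℝ be continuously differentiable, let Δt > 0, and suppose y, y⁺ ∈ ℝᴺ satisfy the AVF scheme for the gradient system ẏ = -∇V(y), i.e. y⁺ = y - Δt ∫₀¹ ∇V((1-ξ) y + ξ y⁺) dξ. Then V(y⁺) - V(y) = -(1/Δt) ‖y⁺ - y‖², and in particular V(y⁺) ≤ V(y); the average vector field method exactly preserves the energy dissipation of gradient systems. -/
open intervalIntegral InnerProductSpace

/-- The AVF method exactly preserves the energy dissipation of gradient systems
`ẏ = -∇V(y)`: if `y⁺ = y - Δt ∫₀¹ ∇V((1-ξ)y + ξy⁺) dξ` then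
`V(y⁺) - V(y) = -(1/Δt)‖y⁺ - y‖²`, in particular `V(y⁺) ≤ V(y)`. -/
theorem avf_gradient_system_energy_dissipation (N : ℕ) (hN : 1 ≤ N)
    (V : EuclideanSpace ℝ (Fin N) → ℝ) (hV : ContDiff ℝ 1 V)
    (gV : EuclideanSpace ℝ (Fin N) → EuclideanSpace ℝ (Fin N))
    (hgV : ∀ y : EuclideanSpace ℝ (Fin N), HasGradientAt V (gV y) y)
    (Δt : ℝ) (hΔt : 0 < Δt)
    (y y' : EuclideanSpace ℝ (Fin N))
    (havf : y' = y - Δt • ∫ ξ in (0:ℝ)..1, gV ((1 - ξ) • y + ξ • y')) :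
    V y' - V y = -(1/Δt) * ‖y' - y‖^2 ∧ V y' ≤ V y := by
  set g : ℝ → EuclideanSpace ℝ (Fin N) := fun ξ => gV ((1 - ξ) • y + ξ • y') with hg
  -- gV is continuous
  have hgVeq : gV = fun x => (toDual ℝ (EuclideanSpace ℝ (Fin N))).symm (fderiv ℝ V x) := by
    funext x
    have := (hgV x).hasFDerivAt.fderiv
    rw [this]; simp
  have hgVc : Continuous gV := by
    rw [hgVeq]
    exact (toDual ℝ (EuclideanSpace ℝ (Fin N))).symm.continuous.comp
      (hV.continuous_fderiv one_ne_zero)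
  have hgc : Continuous g := by
    exact hgVc.comp (((continuous_const.sub continuous_id).smul continuous_const).add
      (continuous_id.smul continuous_const))
  have hint : IntervalIntegrable g MeasureTheory.volume 0 1 :=
    hgc.intervalIntegrable 0 1
  -- FTC along the segment
  have hderiv : ∀ ξ ∈ Set.uIcc (0:ℝ) 1,
      HasDerivAt (fun t => V ((1 - t) • y + t • y')) (inner ℝ (g ξ) (y' - y) : ℝ) ξ := by
    intro ξ _
    have hpath : HasDerivAt (fun t : ℝ => (1 - t) • y + t • y') (y' - y) ξ := by
      have h1 : HasDerivAt (fun t : ℝ => (1 - t) • y) (-y) ξ := by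
        simpa using (((hasDerivAt_id ξ).const_sub 1).smul_const y)
      have h2 : HasDerivAt (fun t : ℝ => t • y') y' ξ := by
        simpa using (hasDerivAt_id ξ).smul_const y'
      have h12 := h1.add h2
      rw [show (-y + y') = y' - y by abel] at h12
      exact h12
    have hF := (hgV ((1 - ξ) • y + ξ • y')).hasFDerivAt
    have := hF.comp_hasDerivAt ξ hpath
    simp [g, toDual_apply_apply] at this ⊢
    exact this
  have hcont : ContinuousOn (fun ξ : ℝ => (inner ℝ (g ξ) (y' - y) : ℝ)) (Set.uIcc 0 1) :=
    (hgc.inner continuous_const).continuousOn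
  have hFTC : V y' - V y = ∫ ξ in (0:ℝ)..1, (inner ℝ (g ξ) (y' - y) : ℝ) := by
    have := intervalIntegral.integral_eq_sub_of_hasDerivAt hderiv
      ((hgc.inner continuous_const).intervalIntegrable 0 1)
    simpa using this.symm
  -- pull the inner product out of the integral
  have hpull : (∫ ξ in (0:ℝ)..1, (inner ℝ (g ξ) (y' - y) : ℝ))
      = inner ℝ (∫ ξ in (0:ℝ)..1, g ξ) (y' - y) := by
    have := (innerSL ℝ (y' - y)).intervalIntegral_comp_comm hint (a := 0) (b := 1)
    simp only [innerSL_apply_apply] at this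
    calc (∫ ξ in (0:ℝ)..1, (inner ℝ (g ξ) (y' - y) : ℝ))
        = ∫ ξ in (0:ℝ)..1, (inner ℝ (y' - y) (g ξ) : ℝ) := by
          simp_rw [real_inner_comm]
      _ = inner ℝ (y' - y) (∫ ξ in (0:ℝ)..1, g ξ) := this
      _ = inner ℝ (∫ ξ in (0:ℝ)..1, g ξ) (y' - y) := real_inner_comm _ _
  -- the AVF relation
  have hI : (∫ ξ in (0:ℝ)..1, g ξ) = (-(1/Δt)) • (y' - y) := by
    have h1 : y' - y = -(Δt • ∫ ξ in (0:ℝ)..1, g ξ) := by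
      rw [havf]; abel
    have h2 : Δt • (∫ ξ in (0:ℝ)..1, g ξ) = -(y' - y) := by
      rw [h1]; simp
    rw [neg_smul, ← smul_neg, ← h2, smul_smul, one_div, inv_mul_cancel₀ hΔt.ne', one_smul]
  have key : V y' - V y = -(1/Δt) * ‖y' - y‖^2 := by
    rw [hFTC, hpull, hI, real_inner_smul_left, real_inner_self_eq_norm_sq]
  refine ⟨key, ?_⟩
  nlinarith [sq_nonneg ‖y' - y‖, key, one_div_pos.mpr hΔt]
end
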